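/- Classical-style weak bisimilarity implies weak bisimilarity, and conversely (classically): for any resumptions r and r*, r ≈c r* if and only if r ≈ r*. (The forward direction is constructive; the converse uses classical logic, ambient in Lean.) -/
import Mathlib


/-! Core definitions: delayful resumptions as an M-type, strong bisimilarity,
convergence, divergence, responsiveness, committedness, weak bisimilarities. -/

abbrev state := String → ℤ

/-- Shapes of the polynomial functor for delayful resumptions. -/
inductive RShape where
  | ret (σ : state)
  | inp
  | out (v : ℤ)
  | delay

/-- The polynomial functor X ↦ state ⊕ (ℤ → X) ⊕ (ℤ × X) ⊕ X. -/
def ResPF : PFunctor :=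
  ⟨RShape, fun s => match s with
    | .ret _ => PEmpty
    | .inp => ℤ
    | .out _ => PUnit
    | .delay => PUnit⟩

/-- Delayful resumptions: the final coalgebra (M-type) of `ResPF`. -/
def Res : Type := ResPF.M

namespace Res

def ret (σ : state) : Res := PFunctor.M.mk ⟨RShape.ret σ, PEmpty.elim⟩

def inp (f : ℤ → Res) : Res := PFunctor.M.mk ⟨RShape.inp, f⟩

def out (v : ℤ) (r : Res) : Res := PFunctor.M.mk ⟨RShape.out v, fun _ => r⟩

def delay (r : Res) : Res := PFunctor.M.mk ⟨RShape.delay, fun _ => r⟩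

/-- The silently diverging resumption ⊥, satisfying ⊥ = δ ⊥. -/
def bot : Res := PFunctor.M.corec (fun _ : Unit => ⟨RShape.delay, fun _ => ()⟩) ()

end Res

/-- One step of strong bisimilarity. -/
def BisimF (R : Res → Res → Prop) (r r₁ : Res) : Prop :=
  (∃ σ, r = Res.ret σ ∧ r₁ = Res.ret σ) ∨
  (∃ f f₁, r = Res.inp f ∧ r₁ = Res.inp f₁ ∧ ∀ v, R (f v) (f₁ v)) ∨
  (∃ v a a₁, r = Res.out v a ∧ r₁ = Res.out v a₁ ∧ R a a₁) ∨
  (∃ a a₁, r = Res.delay a ∧ r₁ = Res.delay a₁ ∧ R a a₁)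

/-- Strong bisimilarity ≅: the greatest relation closed under `BisimF`. -/
def Bisim (r r₁ : Res) : Prop :=
  ∃ R : Res → Res → Prop, (∀ x y, R x y → BisimF R x y) ∧ R r r₁

/-- Convergence r ⇓ r': r converges in finitely many delay steps to a
resumption that has terminated or performs an observable action. -/
inductive Conv : Res → Res → Prop where
  | ret (σ : state) : Conv (Res.ret σ) (Res.ret σ)
  | inp {f f₁ : ℤ → Res} : (∀ v, Bisim (f v) (f₁ v)) → Conv (Res.inp f) (Res.inp f₁)
  | out {v : ℤ} {r r₁ : Res} : Bisim r r₁ → Conv (Res.out v r) (Res.out v r₁)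
  | delay {r r' : Res} : Conv r r' → Conv (Res.delay r) r'

/-- Divergence r ⇑: r silently diverges (greatest predicate with δ r ⇑ whenever r ⇑). -/
def Diverge (r : Res) : Prop :=
  ∃ P : Res → Prop, (∀ x, P x → ∃ x', x = Res.delay x' ∧ P x') ∧ P r

/-- One step of responsiveness. -/
def RespF (P : Res → Prop) (r : Res) : Prop :=
  (∃ σ, Conv r (Res.ret σ)) ∨
  (∃ f, Conv r (Res.inp f) ∧ ∀ v, P (f v)) ∨
  (∃ v r', Conv r (Res.out v r') ∧ P r')

/-- Responsiveness ↓↓ r: the greatest predicate closed under `RespF`. -/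
def Resp (r : Res) : Prop :=
  ∃ P : Res → Prop, (∀ x, P x → RespF P x) ∧ P r

/-- One step of committedness: responsiveness with a divergence option. -/
def CommF (P : Res → Prop) (r : Res) : Prop :=
  (∃ σ, Conv r (Res.ret σ)) ∨
  (∃ f, Conv r (Res.inp f) ∧ ∀ v, P (f v)) ∨
  (∃ v r', Conv r (Res.out v r') ∧ P r') ∨
  Diverge r

/-- Committedness ⇕ r: the greatest predicate closed under `CommF`. -/
def Comm (r : Res) : Prop :=
  ∃ P : Res → Prop, (∀ x, P x → CommF P x) ∧ P r

/-- One step of (termination-sensitive) weak bisimilarity. -/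
def WBisimF (R : Res → Res → Prop) (r r₁ : Res) : Prop :=
  (∃ σ, Conv r (Res.ret σ) ∧ Conv r₁ (Res.ret σ)) ∨
  (∃ f f₁, Conv r (Res.inp f) ∧ Conv r₁ (Res.inp f₁) ∧ ∀ v, R (f v) (f₁ v)) ∨
  (∃ v a a₁, Conv r (Res.out v a) ∧ Conv r₁ (Res.out v a₁) ∧ R a a₁) ∨
  (∃ a a₁, r = Res.delay a ∧ r₁ = Res.delay a₁ ∧ R a a₁)

/-- Weak bisimilarity ≈: the greatest relation closed under `WBisimF`. -/
def WBisim (r r₁ : Res) : Prop :=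
  ∃ R : Res → Res → Prop, (∀ x y, R x y → WBisimF R x y) ∧ R r r₁

/-- The inductive part ≈↓(X) of the second formulation of weak bisimilarity. -/
inductive WBisimI (X : Res → Res → Prop) : Res → Res → Prop where
  | ret (σ : state) : WBisimI X (Res.ret σ) (Res.ret σ)
  | out {v r r₁} : X r r₁ → WBisimI X (Res.out v r) (Res.out v r₁)
  | inp {f f₁} : (∀ v, X (f v) (f₁ v)) → WBisimI X (Res.inp f) (Res.inp f₁)
  | delayL {r r₁} : WBisimI X r r₁ → WBisimI X (Res.delay r) r₁
  | delayR {r r₁} : WBisimI X r r₁ → WBisimI X r (Res.delay r₁)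

/-- One step of the second (Mendler-style) formulation ≈° of weak bisimilarity. -/
def WBisimOF (R : Res → Res → Prop) (r r₁ : Res) : Prop :=
  (∃ X : Res → Res → Prop, (∀ x y, X x y → R x y) ∧ WBisimI X r r₁) ∨
  (∃ a a₁, r = Res.delay a ∧ r₁ = Res.delay a₁ ∧ R a a₁)

/-- The second formulation ≈° of weak bisimilarity (induction nested into coinduction). -/
def WBisimO (r r₁ : Res) : Prop :=
  ∃ R : Res → Res → Prop, (∀ x y, R x y → WBisimOF R x y) ∧ R r r₁

/-- One step of classical-style weak bisimilarity. -/
def WBisimClF (R : Res → Res → Prop) (r r₁ : Res) : Prop :=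
  (∃ σ, Conv r (Res.ret σ) ∧ Conv r₁ (Res.ret σ)) ∨
  (∃ v a a₁, Conv r (Res.out v a) ∧ Conv r₁ (Res.out v a₁) ∧ R a a₁) ∨
  (∃ f f₁, Conv r (Res.inp f) ∧ Conv r₁ (Res.inp f₁) ∧ ∀ v, R (f v) (f₁ v)) ∨
  (Diverge r ∧ Diverge r₁)

/-- Classical-style weak bisimilarity ≈c. -/
def WBisimCl (r r₁ : Res) : Prop :=
  ∃ R : Res → Res → Prop, (∀ x y, R x y → WBisimClF R x y) ∧ R r r₁

section Helpers

open Res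

lemma shape_eq {s s' : RShape} {f f'} (h : (PFunctor.M.mk ⟨s, f⟩ : Res) = PFunctor.M.mk ⟨s', f'⟩) :
    s = s' := congrArg Sigma.fst (PFunctor.M.mk_inj h)

lemma delay_inj {a b : Res} (h : Res.delay a = Res.delay b) : a = b := by
  have h1 := PFunctor.M.mk_inj h
  injection h1 with _ h2
  exact congrFun h2 PUnit.unit

lemma inp_inj {f g : ℤ → Res} (h : Res.inp f = Res.inp g) : f = g := by
  have h1 := PFunctor.M.mk_inj h
  injection h1 with _ h2

lemma ret_ne_delay {σ a} : Res.ret σ ≠ Res.delay a := fun h => by cases shape_eq h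
lemma inp_ne_delay {f a} : Res.inp f ≠ Res.delay a := fun h => by cases shape_eq h
lemma out_ne_delay {v r a} : Res.out v r ≠ Res.delay a := fun h => by cases shape_eq h

lemma diverge_unfold {r : Res} (h : Diverge r) : ∃ a, r = Res.delay a ∧ Diverge a := by
  obtain ⟨P, hP, hr⟩ := h
  obtain ⟨a, rfl, ha⟩ := hP r hr
  exact ⟨a, rfl, P, hP, ha⟩

lemma diverge_delay {a : Res} (h : Diverge a) : Diverge (Res.delay a) := by
  refine ⟨fun x => x = Res.delay a ∨ Diverge x, ?_, Or.inl rfl⟩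
  rintro x (rfl | hx)
  · exact ⟨a, rfl, Or.inr h⟩
  · obtain ⟨b, rfl, hb⟩ := diverge_unfold hx
    exact ⟨b, rfl, Or.inr hb⟩

lemma conv_delay_inv {a x : Res} (h : Conv (Res.delay a) x) : Conv a x := by
  generalize hd : Res.delay a = d at h
  cases h with
  | ret σ => exact absurd hd.symm ret_ne_delay
  | inp _ => exact absurd hd.symm inp_ne_delay
  | out _ => exact absurd hd.symm out_ne_delay
  | delay h' => rw [delay_inj hd]; exact h'

lemma conv_not_diverge {r x : Res} (h : Conv r x) : ¬ Diverge r := by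
  induction h with
  | ret σ => intro hd; obtain ⟨a, ha, _⟩ := diverge_unfold hd; exact ret_ne_delay ha
  | inp _ => intro hd; obtain ⟨a, ha, _⟩ := diverge_unfold hd; exact inp_ne_delay ha
  | out _ => intro hd; obtain ⟨a, ha, _⟩ := diverge_unfold hd; exact out_ne_delay ha
  | delay _ ih => intro hd; obtain ⟨a, ha, hda⟩ := diverge_unfold hd;
                  exact ih (delay_inj ha ▸ hda)

lemma wbisim_unfold {r r₁ : Res} (h : WBisim r r₁) : WBisimF WBisim r r₁ := by
  obtain ⟨R, hR, hrr₁⟩ := h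
  have sub : ∀ x y, R x y → WBisim x y := fun x y hxy => ⟨R, hR, hxy⟩
  rcases hR _ _ hrr₁ with ⟨σ, h1, h2⟩ | ⟨f, f₁, h1, h2, h3⟩ | ⟨v, a, a₁, h1, h2, h3⟩ |
    ⟨a, a₁, h1, h2, h3⟩
  · exact Or.inl ⟨σ, h1, h2⟩
  · exact Or.inr (Or.inl ⟨f, f₁, h1, h2, fun v => sub _ _ (h3 v)⟩)
  · exact Or.inr (Or.inr (Or.inl ⟨v, a, a₁, h1, h2, sub _ _ h3⟩))
  · exact Or.inr (Or.inr (Or.inr ⟨a, a₁, h1, h2, sub _ _ h3⟩))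

/-- If r converges (to anything) and r ≈ r₁, then the classical step holds. -/
lemma conv_case : ∀ {r x : Res}, Conv r x → ∀ {r₁ : Res}, WBisim r r₁ →
    WBisimClF WBisim r r₁ := by
  intro r x h
  induction h with
  | ret σ =>
    intro r₁ hw
    rcases wbisim_unfold hw with ⟨σ', h1, h2⟩ | ⟨f, f₁, h1, h2, h3⟩ |
      ⟨v, a, a₁, h1, h2, h3⟩ | ⟨a, a₁, h1, h2, h3⟩
    · exact Or.inl ⟨σ', h1, h2⟩
    · exact Or.inr (Or.inr (Or.inl ⟨f, f₁, h1, h2, h3⟩))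
    · exact Or.inr (Or.inl ⟨v, a, a₁, h1, h2, h3⟩)
    · exact absurd h1 ret_ne_delay
  | inp hf =>
    intro r₁ hw
    rcases wbisim_unfold hw with ⟨σ', h1, h2⟩ | ⟨f, f₁, h1, h2, h3⟩ |
      ⟨v, a, a₁, h1, h2, h3⟩ | ⟨a, a₁, h1, h2, h3⟩
    · exact Or.inl ⟨σ', h1, h2⟩
    · exact Or.inr (Or.inr (Or.inl ⟨f, f₁, h1, h2, h3⟩))
    · exact Or.inr (Or.inl ⟨v, a, a₁, h1, h2, h3⟩)
    · exact absurd h1 inp_ne_delay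
  | out hb =>
    intro r₁ hw
    rcases wbisim_unfold hw with ⟨σ', h1, h2⟩ | ⟨f, f₁, h1, h2, h3⟩ |
      ⟨v, a, a₁, h1, h2, h3⟩ | ⟨a, a₁, h1, h2, h3⟩
    · exact Or.inl ⟨σ', h1, h2⟩
    · exact Or.inr (Or.inr (Or.inl ⟨f, f₁, h1, h2, h3⟩))
    · exact Or.inr (Or.inl ⟨v, a, a₁, h1, h2, h3⟩)
    · exact absurd h1 out_ne_delay
  | @delay a x _ ih =>
    intro r₁ hw
    rcases wbisim_unfold hw with ⟨σ', h1, h2⟩ | ⟨f, f₁, h1, h2, h3⟩ |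
      ⟨v, b, b₁, h1, h2, h3⟩ | ⟨b, b₁, h1, h2, h3⟩
    · exact Or.inl ⟨σ', h1, h2⟩
    · exact Or.inr (Or.inr (Or.inl ⟨f, f₁, h1, h2, h3⟩))
    · exact Or.inr (Or.inl ⟨v, b, b₁, h1, h2, h3⟩)
    · -- delay case: a = b (by inj), use IH
      cases delay_inj h1
      subst h2
      rcases ih h3 with ⟨σ, c1, c2⟩ | ⟨v, u, u₁, c1, c2, c3⟩ | ⟨f, f₁, c1, c2, c3⟩ | ⟨d1, d2⟩
      · exact Or.inl ⟨σ, Conv.delay c1, Conv.delay c2⟩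
      · exact Or.inr (Or.inl ⟨v, u, u₁, Conv.delay c1, Conv.delay c2, c3⟩)
      · exact Or.inr (Or.inr (Or.inl ⟨f, f₁, Conv.delay c1, Conv.delay c2, c3⟩))
      · exact Or.inr (Or.inr (Or.inr ⟨diverge_delay d1, diverge_delay d2⟩))

lemma noconv_diverge {r r₁ : Res} (hw : WBisim r r₁) (hn : ¬ ∃ x, Conv r x) :
    Diverge r ∧ Diverge r₁ := by
  constructor
  · refine ⟨fun x => ∃ y, WBisim x y ∧ ¬ ∃ z, Conv x z, ?_, r₁, hw, hn⟩
    rintro x ⟨y, hxy, hnx⟩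
    rcases wbisim_unfold hxy with ⟨σ, h1, _⟩ | ⟨f, f₁, h1, _, _⟩ |
      ⟨v, a, a₁, h1, _, _⟩ | ⟨a, a₁, h1, h2, h3⟩
    · exact absurd ⟨_, h1⟩ hnx
    · exact absurd ⟨_, h1⟩ hnx
    · exact absurd ⟨_, h1⟩ hnx
    · exact ⟨a, h1, a₁, h3, fun ⟨z, hz⟩ => hnx ⟨z, h1 ▸ Conv.delay hz⟩⟩
  · refine ⟨fun y => ∃ x, WBisim x y ∧ ¬ ∃ z, Conv x z, ?_, r, hw, hn⟩
    rintro y ⟨x, hxy, hnx⟩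
    rcases wbisim_unfold hxy with ⟨σ, h1, _⟩ | ⟨f, f₁, h1, _, _⟩ |
      ⟨v, a, a₁, h1, _, _⟩ | ⟨a, a₁, h1, h2, h3⟩
    · exact absurd ⟨_, h1⟩ hnx
    · exact absurd ⟨_, h1⟩ hnx
    · exact absurd ⟨_, h1⟩ hnx
    · exact ⟨a₁, h2, a, h3, fun ⟨z, hz⟩ => hnx ⟨z, h1 ▸ Conv.delay hz⟩⟩

end Helpers

/-- Classical-style weak bisimilarity coincides (classically) with
constructive-style weak bisimilarity. -/
theorem wbisimCl_iff_wbisim : ∀ r r₁ : Res, WBisimCl r r₁ ↔ WBisim r r₁ := by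
  intro r r₁
  constructor
  · -- forward: take R := WBisimCl
    intro h
    refine ⟨WBisimCl, ?_, h⟩
    intro x y hxy
    obtain ⟨R, hR, hxy⟩ := hxy
    have sub : ∀ u w, R u w → WBisimCl u w := fun u w h => ⟨R, hR, h⟩
    rcases hR _ _ hxy with ⟨σ, h1, h2⟩ | ⟨v, a, a₁, h1, h2, h3⟩ |
      ⟨f, f₁, h1, h2, h3⟩ | ⟨d1, d2⟩
    · exact Or.inl ⟨σ, h1, h2⟩
    · exact Or.inr (Or.inr (Or.inl ⟨v, a, a₁, h1, h2, sub _ _ h3⟩))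
    · exact Or.inr (Or.inl ⟨f, f₁, h1, h2, fun v => sub _ _ (h3 v)⟩)
    · obtain ⟨a, rfl, ha⟩ := diverge_unfold d1
      obtain ⟨a₁, rfl, ha₁⟩ := diverge_unfold d2
      refine Or.inr (Or.inr (Or.inr ⟨a, a₁, rfl, rfl, ?_⟩))
      exact ⟨fun u w => Diverge u ∧ Diverge w,
        fun u w ⟨hu, hw⟩ => Or.inr (Or.inr (Or.inr ⟨hu, hw⟩)), ha, ha₁⟩
  · -- backward: take R := WBisim
    intro h
    refine ⟨WBisim, ?_, h⟩
    intro x y hxy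
    by_cases hc : ∃ z, Conv x z
    · obtain ⟨z, hz⟩ := hc
      exact conv_case hz hxy
    · obtain ⟨d1, d2⟩ := noconv_diverge hxy hc
      exact Or.inr (Or.inr (Or.inr ⟨d1, d2⟩))
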